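/- arXiv:0805.3479 — 4 statements merged into one kernel-verified Lean document; each statement's English description precedes it below -/
import Mathlib

section
/- Let r_0, ..., r_{m-1} generate the group A_m ≅ S_{m+1} acting on Z^m via r_i(b_j) = b_j + m_{ij} b_i where m_{ii} = -2, m_{ij} = 1 if |i-j| = 1, and m_{ij} = 0 otherwise. Then for every integer s ≥ 2 and m ≥ 2, the reduction modulo s of this representation is faithful; that is, the image group in GL_m(Z/sZ) is isomorphic to S_{m+1}. -/
/-- The standard root representation of the Coxeter group `A_m ≅ S_{m+1}` over `ℤ`:
`r_i(b_l) = b_l + m_{il} b_i` with `m_{ii} = -2`, `m_{il} = 1` if `|i - l| = 1`, and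
`m_{il} = 0` otherwise.  `AmGen m i` is the matrix of `r_i` (columns are the images
of the basis vectors). -/
def AmGen (m : ℕ) (i : Fin m) : Matrix (Fin m) (Fin m) ℤ :=
  Matrix.of fun k l =>
    (if k = l then 1 else 0) +
      (if k = i then
        (if l = i then -2 else if (l : ℕ) + 1 = (i : ℕ) ∨ (i : ℕ) + 1 = (l : ℕ) then 1 else 0)
      else 0)

/-- The matrix of a permutation `σ` of `{0, …, m}` acting on the root lattice of `A_m`
in the basis `b_j = e_j - e_{j+1}`. -/
def PM (m : ℕ) (σ : Equiv.Perm (Fin (m+1))) : Matrix (Fin m) (Fin m) ℤ :=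
  Matrix.of fun k j =>
    (if ((σ j.castSucc : Fin (m+1)) : ℕ) ≤ (k : ℕ) then 1 else 0) -
      (if ((σ j.succ : Fin (m+1)) : ℕ) ≤ (k : ℕ) then 1 else 0)

lemma PM_one (m : ℕ) : PM m 1 = 1 := by
  ext k j
  simp only [PM, Matrix.of_apply, Equiv.Perm.one_apply, Matrix.one_apply,
    Fin.coe_castSucc, Fin.val_succ, Fin.ext_iff]
  split_ifs <;> omega

lemma telescope (m a : ℕ) (ha : a ≤ m) (g : ℕ → ℤ) :
    ∑ l ∈ Finset.range m, (if a ≤ l then (1:ℤ) else 0) * (g l - g (l+1)) = g a - g m := by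
  have h1 : ∀ l ∈ Finset.range m, (if a ≤ l then (1:ℤ) else 0) * (g l - g (l+1)) =
      if a ≤ l then g l - g (l+1) else 0 := by
    intro l _; split_ifs <;> ring
  rw [Finset.sum_congr rfl h1, ← Finset.sum_filter]
  have h2 : (Finset.range m).filter (fun l => a ≤ l) = Finset.Ico a m := by
    ext l; simp [Finset.mem_Ico, and_comm]
  rw [h2, Finset.sum_Ico_eq_sum_range]
  have h3 : ∀ i ∈ Finset.range (m - a), g (a + i) - g (a + i + 1) =
      (fun i => g (a + i)) i - (fun i => g (a + i)) (i + 1) := by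
    intro i _; simp [Nat.add_assoc]
  rw [Finset.sum_congr rfl h3, Finset.sum_range_sub' (fun i => g (a + i))]
  simp [Nat.add_sub_cancel' ha]

open Fin.NatCast in
lemma PM_mul (m : ℕ) (σ τ : Equiv.Perm (Fin (m+1))) :
    PM m (σ * τ) = PM m σ * PM m τ := by
  ext k j
  rw [Matrix.mul_apply]
  set g : ℕ → ℤ := fun b => if ((σ ((b : ℕ) : Fin (m+1)) : Fin (m+1)) : ℕ) ≤ (k : ℕ) then 1 else 0 with hg
  have hcast : ∀ b : ℕ, b ≤ m → (((b : ℕ) : Fin (m+1)) : ℕ) = b := fun b hb =>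
    Fin.val_cast_of_lt (by omega)
  have hPMg : ∀ l : Fin m, PM m σ k l = g (l : ℕ) - g ((l : ℕ) + 1) := by
    intro l
    have e1 : (((l : ℕ) : ℕ) : Fin (m+1)) = l.castSucc := by
      apply Fin.ext; rw [hcast _ (by omega)]; simp
    have e2 : ((((l : ℕ) + 1) : ℕ) : Fin (m+1)) = l.succ := by
      apply Fin.ext; rw [hcast _ (by omega)]; simp
    simp only [hg, e1, e2, PM, Matrix.of_apply]
  have key : ∀ a : Fin (m+1), ∑ l : Fin m, PM m σ k l * (if (a : ℕ) ≤ (l : ℕ) then (1:ℤ) else 0)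
      = g (a : ℕ) - g m := by
    intro a
    have := telescope m (a : ℕ) (by omega) g
    rw [← this,
      ← Fin.sum_univ_eq_sum_range (fun l => (if (a : ℕ) ≤ l then (1:ℤ) else 0) * (g l - g (l+1))) m]
    exact Finset.sum_congr rfl fun l _ => by rw [hPMg l]; ring
  have hj1 : ((τ j.castSucc : Fin (m+1)) : ℕ) ≤ m := by omega
  have hj2 : ((τ j.succ : Fin (m+1)) : ℕ) ≤ m := by omega
  have expand : ∀ l : Fin m, PM m σ k l * PM m τ l j =
      PM m σ k l * (if ((τ j.castSucc : Fin (m+1)) : ℕ) ≤ (l : ℕ) then (1:ℤ) else 0)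
      - PM m σ k l * (if ((τ j.succ : Fin (m+1)) : ℕ) ≤ (l : ℕ) then (1:ℤ) else 0) := by
    intro l
    simp only [PM, Matrix.of_apply]
    ring
  rw [Finset.sum_congr rfl (fun l _ => expand l), Finset.sum_sub_distrib, key, key]
  have c1 : (((τ j.castSucc : Fin (m+1)) : ℕ) : Fin (m+1)) = τ j.castSucc := by
    apply Fin.ext; exact hcast _ hj1
  have c2 : (((τ j.succ : Fin (m+1)) : ℕ) : Fin (m+1)) = τ j.succ := by
    apply Fin.ext; exact hcast _ hj2
  simp only [hg, c1, c2, PM, Matrix.of_apply, Equiv.Perm.mul_apply]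
  split_ifs <;> omega

lemma PM_swap (m : ℕ) (i : Fin m) :
    PM m (Equiv.swap i.castSucc i.succ) = AmGen m i := by
  ext k j
  simp only [PM, AmGen, Matrix.of_apply, Equiv.swap_apply_def]
  split_ifs <;>
    simp only [Fin.ext_iff, Fin.coe_castSucc, Fin.val_succ] at * <;> omega

/-- The representation as a homomorphism into the units of the matrix ring. -/
def Phi (m : ℕ) : Equiv.Perm (Fin (m+1)) →* (Matrix (Fin m) (Fin m) ℤ)ˣ where
  toFun σ :=
    ⟨PM m σ, PM m σ⁻¹, by rw [← PM_mul, mul_inv_cancel, PM_one],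
      by rw [← PM_mul, inv_mul_cancel, PM_one]⟩
  map_one' := Units.ext (by simpa using PM_one m)
  map_mul' σ τ := Units.ext (by simpa using PM_mul m σ τ)

lemma sigma_eq_one (m s : ℕ) (hm : 2 ≤ m) (hs : 2 ≤ s) (σ : Equiv.Perm (Fin (m+1)))
    (H : ∀ k j : Fin m, (s:ℤ) ∣ (PM m σ k j - if k = j then 1 else 0)) : σ = 1 := by
  have H' : ∀ (K J : ℕ) (hK : K < m) (hJ : J < m),
      (s:ℤ) ∣ ((if ((σ ⟨J, by omega⟩ : Fin (m+1)) : ℕ) ≤ K then (1:ℤ) else 0)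
        - (if ((σ ⟨J+1, by omega⟩ : Fin (m+1)) : ℕ) ≤ K then 1 else 0)
        - (if K = J then 1 else 0)) := by
    intro K J hK hJ
    have := H ⟨K, hK⟩ ⟨J, hJ⟩
    simp only [PM, Matrix.of_apply] at this
    convert this using 3
    all_goals simp [Fin.ext_iff]
  have not_pm1 : ∀ d : ℤ, (s:ℤ) ∣ d → d ≠ 1 ∧ d ≠ -1 := by
    intro d hd
    constructor <;> rintro rfl
    · exact absurd (Int.le_of_dvd one_pos hd) (by omega)
    · have h1 : (s:ℤ) ∣ 1 := (dvd_neg).mp hd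
      exact absurd (Int.le_of_dvd one_pos h1) (by omega)
  suffices h : ∀ n (hn : n < m + 1), σ ⟨n, hn⟩ = ⟨n, hn⟩ by
    apply Equiv.ext
    intro x
    simpa using h x.val x.isLt
  intro n
  induction n using Nat.strong_induction_on with
  | _ n IH =>
    intro hn
    by_contra hne
    have hge : ∀ (x : ℕ) (hx : x < m + 1), n ≤ x → n ≤ (σ ⟨x, hx⟩ : ℕ) := by
      intro x hx hnx
      by_contra hc
      push_neg at hc
      have hfix := IH _ hc (σ ⟨x, hx⟩).isLt
      have : (⟨x, hx⟩ : Fin (m+1)) = ⟨(σ ⟨x, hx⟩ : ℕ), (σ ⟨x, hx⟩).isLt⟩ :=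
        σ.injective (by rw [hfix, Fin.eta])
      simp only [Fin.mk.injEq] at this
      omega
    set B := (σ ⟨n, hn⟩ : ℕ) with hBdef
    have hBm : B < m + 1 := (σ ⟨n, hn⟩).isLt
    have hBn : n < B := by
      rcases Nat.lt_or_ge n B with h | h
      · exact h
      · exfalso
        have := hge n hn le_rfl
        have hBeq : B = n := by omega
        exact hne (Fin.ext hBeq)
    have hnm : n < m := by omega
    have hn1 : n + 1 < m + 1 := by omega
    set C := (σ ⟨n+1, hn1⟩ : ℕ) with hCdef
    have hCm : C < m + 1 := (σ ⟨n+1, hn1⟩).isLt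
    have hCge : n ≤ C := hge (n+1) hn1 (by omega)
    have hCB : C ≠ B := by
      intro h
      have := σ.injective (Fin.ext (show (σ ⟨n+1,hn1⟩ : ℕ) = (σ ⟨n,hn⟩ : ℕ) from h) :
        σ ⟨n+1, hn1⟩ = σ ⟨n, hn⟩)
      simp only [Fin.mk.injEq] at this
      omega
    rcases Nat.eq_or_lt_of_le hCge with hCn | hCgt
    · -- C = n
      rcases Nat.lt_or_ge (n+1) B with hB2 | hB2
      · -- B ≥ n + 2, so n+1 < m; use K = n+1, J = n
        have hKm : n + 1 < m := by omega
        have hd := H' (n+1) n hKm hnm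
        have e1 : ((σ ⟨n, by omega⟩ : Fin (m+1)) : ℕ) = B := rfl
        have e2 : ((σ ⟨n+1, by omega⟩ : Fin (m+1)) : ℕ) = C := rfl
        rw [e1, e2, if_neg (by omega), if_pos (by omega), if_neg (by omega)] at hd
        exact (not_pm1 _ hd).2 (by norm_num)
      · -- B = n+1
        have hBeq : B = n + 1 := by omega
        rcases Nat.lt_or_ge (n+1) m with hM | hM
        · -- n + 2 ≤ m; use K = n, J = n+1
          have hn2 : n + 2 < m + 1 := by omega
          have hD : n + 2 ≤ (σ ⟨n+2, hn2⟩ : ℕ) := by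
            have h1 := hge (n+2) hn2 (by omega)
            have h2 : (σ ⟨n+2, hn2⟩ : ℕ) ≠ C := by
              intro h
              have := σ.injective (Fin.ext (h.trans (rfl : C = C)) :
                σ ⟨n+2, hn2⟩ = σ ⟨n+1, hn1⟩)
              simp only [Fin.mk.injEq] at this; omega
            have h3 : (σ ⟨n+2, hn2⟩ : ℕ) ≠ B := by
              intro h
              have := σ.injective (Fin.ext h : σ ⟨n+2, hn2⟩ = σ ⟨n, hn⟩)
              simp only [Fin.mk.injEq] at this; omega
            omega
          have hd := H' n (n+1) hnm hM
          have e1 : ((σ ⟨n+1, by omega⟩ : Fin (m+1)) : ℕ) = C := rfl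
          have e2 : ((σ ⟨n+1+1, by omega⟩ : Fin (m+1)) : ℕ) = (σ ⟨n+2, hn2⟩ : ℕ) := rfl
          rw [e1, e2, if_pos (by omega), if_neg (by omega), if_neg (by omega)] at hd
          exact (not_pm1 _ hd).1 (by norm_num)
        · -- n + 1 = m; use K = n, J = n - 1
          have hmn : m = n + 1 := by omega
          have hn0 : 1 ≤ n := by omega
          have hJm : n - 1 < m := by omega
          have hd := H' n (n-1) hnm hJm
          have efix := IH (n-1) (by omega) (by omega : n - 1 < m + 1)
          have e1 : ((σ ⟨n-1, by omega⟩ : Fin (m+1)) : ℕ) = n - 1 := by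
            rw [efix]
          have e2 : (⟨n-1+1, by omega⟩ : Fin (m+1)) = ⟨n, hn⟩ := by
            apply Fin.ext; simp; omega
          have e2' : ((σ ⟨n-1+1, by omega⟩ : Fin (m+1)) : ℕ) = B := by
            rw [e2]
          rw [e1, e2', if_pos (by omega), if_neg (by omega), if_neg (by omega)] at hd
          exact (not_pm1 _ hd).1 (by norm_num)
    · -- C > n : use K = n, J = n
      have hd := H' n n hnm hnm
      have e1 : ((σ ⟨n, by omega⟩ : Fin (m+1)) : ℕ) = B := rfl
      have e2 : ((σ ⟨n+1, by omega⟩ : Fin (m+1)) : ℕ) = C := rfl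
      rw [e1, e2, if_neg (by omega), if_neg (by omega), if_pos rfl] at hd
      exact (not_pm1 _ hd).2 (by norm_num)

/-- For all `m ≥ 2` and `s ≥ 2`, the reduction modulo `s` of the standard
root representation of `A_m ≅ S_{m+1}` is faithful: the reduction map is injective on the
subgroup of `GL_m(ℤ)` generated by the reflections `r_0, …, r_{m-1}`, and its image in
`GL_m(ℤ/s)` is isomorphic to the symmetric group `S_{m+1}`. -/
theorem stmt_3 (m s : ℕ) (hm : 2 ≤ m) (hs : 2 ≤ s)
    (u : Fin m → (Matrix (Fin m) (Fin m) ℤ)ˣ)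
    (hu : ∀ i, (u i : Matrix (Fin m) (Fin m) ℤ) = AmGen m i) :
    Set.InjOn (Units.map ((Int.castRingHom (ZMod s)).mapMatrix.toMonoidHom))
        (↑(Subgroup.closure (Set.range u)) : Set (Matrix (Fin m) (Fin m) ℤ)ˣ) ∧
      Nonempty
        (((Subgroup.closure (Set.range u)).map
            (Units.map ((Int.castRingHom (ZMod s)).mapMatrix.toMonoidHom))) ≃*
          Equiv.Perm (Fin (m + 1))) := by
  set R : Matrix (Fin m) (Fin m) ℤ →* Matrix (Fin m) (Fin m) (ZMod s) :=
    ((Int.castRingHom (ZMod s)).mapMatrix (m := Fin m)).toMonoidHom with hR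
  set Um := Units.map R with hUm
  set Ψ := Um.comp (Phi m) with hΨ
  -- the generators agree
  have h_swap : ∀ i : Fin m, Phi m (Equiv.swap i.castSucc i.succ) = u i := by
    intro i
    apply Units.ext
    rw [hu i]
    exact PM_swap m i
  -- the closure is the range of Phi
  have h_closure : Subgroup.closure (Set.range u) = (Phi m).range := by
    have hu_eq : Set.range u = (Phi m) '' Set.range (fun i : Fin m =>
        Equiv.swap i.castSucc i.succ) := by
      rw [show u = (Phi m) ∘ (fun i : Fin m => Equiv.swap i.castSucc i.succ) from
        funext fun i => (h_swap i).symm, Set.range_comp]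
    rw [hu_eq, ← MonoidHom.map_closure,
      Subgroup.closure_eq_top_of_mclosure_eq_top (Equiv.Perm.mclosure_swap_castSucc_succ m),
      ← MonoidHom.range_eq_map]
  -- injectivity of the composed map
  have hinj : Function.Injective Ψ := by
    rw [injective_iff_map_eq_one]
    intro σ hσ
    apply sigma_eq_one m s hm hs
    intro k j
    have hval : R (PM m σ) = 1 := by
      have := congrArg Units.val hσ
      simp [hΨ, hUm] at this
      exact this
    have hentry : ((PM m σ k j : ℤ) : ZMod s) = if k = j then 1 else 0 := by
      have := congrFun (congrFun (congrArg (fun M => (M : Matrix (Fin m) (Fin m) (ZMod s))) hval) k) j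
      simpa [hR, RingHom.mapMatrix_apply, Matrix.map_apply, Matrix.one_apply] using this
    have h0 : ((PM m σ k j - if k = j then (1:ℤ) else 0 : ℤ) : ZMod s) = 0 := by
      push_cast
      rw [hentry]
      split_ifs <;> simp
    exact (ZMod.intCast_zmod_eq_zero_iff_dvd _ s).mp h0
  constructor
  · intro x hx y hy hxy
    rw [SetLike.mem_coe, h_closure] at hx hy
    obtain ⟨σ, rfl⟩ := hx
    obtain ⟨τ, rfl⟩ := hy
    rw [hinj (show Ψ σ = Ψ τ from hxy)]
  · have hmap : (Subgroup.closure (Set.range u)).map Um = Ψ.range := by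
      rw [h_closure, MonoidHom.range_eq_map, Subgroup.map_map, hΨ, MonoidHom.range_eq_map]
    rw [hmap]
    exact ⟨(MonoidHom.ofInjective hinj).symm⟩
end

section
/- Let E = T ⋊ H be a semidirect product where T consists of translations t satisfying t(b_i) = b_i + z_i c with z_i ∈ Z and c = ∑_k x_k b_k an integral vector with x_j = 1 (coefficient of b_j equal to 1), and H is a group of lattice automorphisms satisfying h(b_i) ∈ b_i + span_Z{b_{j+1},...,b_{j+m}} for all h ∈ H. Suppose reduction modulo s is injective on H. Then the kernel of the reduction-mod-s map φ : E → E^s is contained in T. -/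
/-- Lemma `toroidreduce`(a).  Let `E = T ⋊ H ⊆ GL_{m+1}(ℤ)` where every
`t ∈ T` is a translation, `t(b_i) = b_i + z_i c`, for an integral vector `c` whose
coefficient at `b_0` equals `1`, and every `h ∈ H` satisfies
`h(b_i) ∈ b_i + span_ℤ{b_1, …, b_m}` (so the `b_0`-coordinate of `h(b_i)` is `δ_{0i}`).
If reduction modulo `s` is injective on `H`, then the kernel of the reduction map
`φ : E → E^s` is contained in `T`: any `g = t h` (`t ∈ T`, `h ∈ H`) reducing to the
identity mod `s` lies in `T`. -/
theorem stmt_9 (m s : ℕ) (hs : 2 ≤ s)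
    (T H : Subgroup (Matrix (Fin (m + 1)) (Fin (m + 1)) ℤ)ˣ)
    (c : Fin (m + 1) → ℤ) (hc0 : c 0 = 1)
    (hT : ∀ t ∈ T, ∃ z : Fin (m + 1) → ℤ, ∀ k i,
      ((t : Matrix (Fin (m + 1)) (Fin (m + 1)) ℤ)) k i =
        (if k = i then 1 else 0) + z i * c k)
    (hH : ∀ h ∈ H, ∀ i,
      ((h : Matrix (Fin (m + 1)) (Fin (m + 1)) ℤ)) 0 i = if i = 0 then 1 else 0)
    (hHinj : Set.InjOn
      (fun A : (Matrix (Fin (m + 1)) (Fin (m + 1)) ℤ)ˣ =>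
        (A : Matrix (Fin (m + 1)) (Fin (m + 1)) ℤ).map (Int.cast : ℤ → ZMod s))
      (↑H : Set (Matrix (Fin (m + 1)) (Fin (m + 1)) ℤ)ˣ))
    (g t h : (Matrix (Fin (m + 1)) (Fin (m + 1)) ℤ)ˣ)
    (ht : t ∈ T) (hh : h ∈ H) (hg : g = t * h)
    (hker : (g : Matrix (Fin (m + 1)) (Fin (m + 1)) ℤ).map (Int.cast : ℤ → ZMod s) = 1) :
    g ∈ T := by

  obtain ⟨z, hz⟩ := hT t ht
  -- entries of g
  have hge : ∀ k i, (g : Matrix (Fin (m + 1)) (Fin (m + 1)) ℤ) k i =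
      (h : Matrix (Fin (m + 1)) (Fin (m + 1)) ℤ) k i +
      c k * ∑ j, z j * (h : Matrix (Fin (m + 1)) (Fin (m + 1)) ℤ) j i := by
    intro k i
    have : (g : Matrix (Fin (m + 1)) (Fin (m + 1)) ℤ) =
        (t : Matrix (Fin (m + 1)) (Fin (m + 1)) ℤ) *
        (h : Matrix (Fin (m + 1)) (Fin (m + 1)) ℤ) := by
      rw [hg]; rfl
    rw [this]
    simp only [Matrix.mul_apply, hz]
    rw [Finset.sum_congr rfl (fun j _ => add_mul _ _ _)]
    rw [Finset.sum_add_distrib]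
    congr 1
    · simp [ite_mul]
    · rw [Finset.mul_sum]
      exact Finset.sum_congr rfl (fun j _ => by ring)
  have hker' : ∀ k i, ((g : Matrix (Fin (m + 1)) (Fin (m + 1)) ℤ) k i : ZMod s) =
      if k = i then 1 else 0 := by
    intro k i
    have := congrFun (congrFun hker k) i
    simpa [Matrix.map_apply, Matrix.one_apply] using this
  -- the sum vanishes mod s
  have hw : ∀ i, ((∑ j, z j * (h : Matrix (Fin (m + 1)) (Fin (m + 1)) ℤ) j i : ℤ) : ZMod s) = 0 := by
    intro i
    have h0 := hker' 0 i
    rw [hge 0 i, hH h hh i, hc0, one_mul] at h0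
    push_cast at h0
    rcases eq_or_ne i 0 with h' | h'
    · subst h'; simpa using h0
    · simp [h', Ne.symm h'] at h0
      simpa using h0
  -- h ≡ 1 mod s, hence h = 1
  have hmap : (h : Matrix (Fin (m + 1)) (Fin (m + 1)) ℤ).map (Int.cast : ℤ → ZMod s) =
      ((1 : (Matrix (Fin (m + 1)) (Fin (m + 1)) ℤ)ˣ) : Matrix (Fin (m + 1)) (Fin (m + 1)) ℤ).map
        (Int.cast : ℤ → ZMod s) := by
    ext k i
    have := hker' k i
    rw [hge k i, Int.cast_add, Int.cast_mul, hw i, mul_zero, add_zero] at this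
    simp [Matrix.map_apply, Matrix.one_apply, this]
  have h1 : h = 1 := hHinj hh H.one_mem hmap
  rw [hg, h1, mul_one]
  exact ht
end

section
/- Let G = ⟨r_0, ..., r_{n-1}⟩ be a crystallographic string Coxeter group, let s ≥ 2 divide d, and suppose G^s (the reduction of G mod s) is a string C-group. Suppose the facet subgroup G_{n-1} = ⟨r_0,...,r_{n-2}⟩ is finite (spherical) and the reduction map G_{n-1} → G_{n-1}^s is an isomorphism. Then G^d is a string C-group, i.e., the images q_0,...,q_{n-1} of the generators mod d are involutions satisfying the intersection condition ⟨q_i : i ∈ I⟩ ∩ ⟨q_i : i ∈ J⟩ = ⟨q_i : i ∈ I ∩ J⟩ for all I, J ⊆ {0,...,n-1}. -/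
lemma aux_closure_commute {G : Type*} [Group G] {S T : Set G}
    (h : ∀ a ∈ S, ∀ b ∈ T, Commute a b) :
    ∀ a ∈ Subgroup.closure S, ∀ b ∈ Subgroup.closure T, Commute a b := by
  have step : ∀ a ∈ S, ∀ b ∈ Subgroup.closure T, Commute a b := by
    intro a ha b hb
    induction hb using Subgroup.closure_induction with
    | mem x hx => exact h a ha x hx
    | one => exact Commute.one_right a
    | mul x y hx hy cx cy => exact cx.mul_right cy
    | inv x hx cx => exact cx.inv_right
  intro a ha b hb
  induction ha using Subgroup.closure_induction with
  | mem x hx => exact step x hx b hb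
  | one => exact Commute.one_left b
  | mul x y hx hy cx cy => exact cx.mul_left cy
  | inv x hx cx => exact cx.inv_left

lemma aux_mem_closure_union {G : Type*} [Group G] {S T : Set G}
    (h : ∀ a ∈ S, ∀ b ∈ T, Commute a b) {g : G}
    (hg : g ∈ Subgroup.closure (S ∪ T)) :
    ∃ a ∈ Subgroup.closure S, ∃ b ∈ Subgroup.closure T, g = a * b := by
  have hc := aux_closure_commute h
  induction hg using Subgroup.closure_induction with
  | mem x hx =>
    rcases hx with hx | hx
    · exact ⟨x, Subgroup.subset_closure hx, 1, one_mem _, (mul_one x).symm⟩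
    · exact ⟨1, one_mem _, x, Subgroup.subset_closure hx, (one_mul x).symm⟩
  | one => exact ⟨1, one_mem _, 1, one_mem _, (one_mul 1).symm⟩
  | mul x y hx hy ihx ihy =>
    obtain ⟨a, ha, b, hb, rfl⟩ := ihx
    obtain ⟨a', ha', b', hb', rfl⟩ := ihy
    refine ⟨a * a', mul_mem ha ha', b * b', mul_mem hb hb', ?_⟩
    have hba : b * a' = a' * b := (hc a' ha' b hb).symm.eq
    calc a * b * (a' * b') = a * (b * a') * b' := by group
      _ = a * (a' * b) * b' := by rw [hba]
      _ = a * a' * (b * b') := by group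
  | inv x hx ihx =>
    obtain ⟨a, ha, b, hb, rfl⟩ := ihx
    refine ⟨a⁻¹, inv_mem ha, b⁻¹, inv_mem hb, ?_⟩
    rw [mul_inv_rev, (hc a⁻¹ (inv_mem ha) b⁻¹ (inv_mem hb)).eq]



/-- A family `ρ : Fin n → Γ` of elements of a group makes `Γ` a *string C-group family*
if the `ρ i` are involutions, non-adjacent generators commute (so that the underlying
diagram is a string), and the intersection condition on standard subgroups holds. -/
def IsStringCGroup {Γ : Type*} [Group Γ] {n : ℕ} (ρ : Fin n → Γ) : Prop :=
  (∀ i, orderOf (ρ i) = 2) ∧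
  (∀ i j : Fin n, (i : ℕ) + 2 ≤ (j : ℕ) → (ρ i * ρ j) ^ 2 = 1) ∧
  (∀ I J : Set (Fin n),
    Subgroup.closure (ρ '' I) ⊓ Subgroup.closure (ρ '' J) = Subgroup.closure (ρ '' (I ∩ J)))

/-- Reduction modulo `d` of integral invertible matrices, `GL_n(ℤ) → GL_n(ℤ/d)`. -/
def modRed (n d : ℕ) :
    (Matrix (Fin n) (Fin n) ℤ)ˣ →* (Matrix (Fin n) (Fin n) (ZMod d))ˣ :=
  Units.map ((Int.castRingHom (ZMod d)).mapMatrix.toMonoidHom)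

/-- Theorem `interquotA`(a), spherical case.  Let
`G = ⟨r_0, …, r_{n-1}⟩ ⊆ GL_n(ℤ)` be a crystallographic string Coxeter group (the `r_i`
are involutions satisfying the string commutation relations), let `2 ≤ s ∣ d`, and
suppose the reduction `G^s` is a string C-group.  If the facet subgroup
`G_{n-1} = ⟨r_0, …, r_{n-2}⟩` is finite (spherical) and reduction mod `s` is injective
on it (`G_{n-1} ≅ G_{n-1}^s`), then `G^d` is a string C-group. -/
theorem stmt_10 (n : ℕ) (r : Fin (n + 1) → (Matrix (Fin (n + 1)) (Fin (n + 1)) ℤ)ˣ)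
    (hinv : ∀ i, orderOf (r i) = 2)
    (hcomm : ∀ i j : Fin (n + 1), (i : ℕ) + 2 ≤ (j : ℕ) → (r i * r j) ^ 2 = 1)
    (s d : ℕ) (hs : 2 ≤ s) (hd : 2 ≤ d) (hsd : s ∣ d)
    (hCs : IsStringCGroup fun i => modRed (n + 1) s (r i))
    (hfin : Finite (Subgroup.closure (Set.range fun i : Fin n => r i.castSucc)))
    (hfaithful : Set.InjOn (modRed (n + 1) s)
      (↑(Subgroup.closure (Set.range fun i : Fin n => r i.castSucc)) :
        Set (Matrix (Fin (n + 1)) (Fin (n + 1)) ℤ)ˣ)) :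
    IsStringCGroup fun i => modRed (n + 1) d (r i) := by
  obtain ⟨hs1, hs2, hsint⟩ := hCs
  set q : Fin (n + 1) → (Matrix (Fin (n + 1)) (Fin (n + 1)) (ZMod d))ˣ :=
    fun i => modRed (n + 1) d (r i) with hqdef
  set lam : Fin (n + 1) → (Matrix (Fin (n + 1)) (Fin (n + 1)) (ZMod s))ˣ :=
    fun i => modRed (n + 1) s (r i) with hlamdef
  set π : (Matrix (Fin (n + 1)) (Fin (n + 1)) (ZMod d))ˣ →*
      (Matrix (Fin (n + 1)) (Fin (n + 1)) (ZMod s))ˣ :=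
    Units.map ((ZMod.castHom hsd (ZMod s)).mapMatrix.toMonoidHom) with hπdef
  have hπq : ∀ x : (Matrix (Fin (n + 1)) (Fin (n + 1)) ℤ)ˣ,
      π (modRed (n + 1) d x) = modRed (n + 1) s x := by
    intro x
    ext i j
    simp [modRed, hπdef, RingHom.mapMatrix_apply, Matrix.map_map]
  have hπqi : ∀ i, π (q i) = lam i := fun i => hπq (r i)
  -- involutions
  have hr2 : ∀ i, (r i) ^ 2 = 1 := fun i => by
    rw [← hinv i]; exact pow_orderOf_eq_one (r i)
  have hq2 : ∀ i, (q i) ^ 2 = 1 := fun i => by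
    rw [hqdef]; rw [← map_pow, hr2, map_one]
  have hq2' : ∀ i j : Fin (n + 1), (i : ℕ) + 2 ≤ (j : ℕ) → (q i * q j) ^ 2 = 1 := by
    intro i j hij
    rw [hqdef]
    rw [← map_mul, ← map_pow, hcomm i j hij, map_one]
  have hqcomm : ∀ i j : Fin (n + 1), (i : ℕ) + 2 ≤ (j : ℕ) → Commute (q i) (q j) := by
    intro i j hij
    have h1 : (q i * q j) * (q i * q j) = 1 := by rw [← sq]; exact hq2' i j hij
    have h2 : (q i * q j)⁻¹ = q i * q j := inv_eq_of_mul_eq_one_right h1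
    have hxi : (q i)⁻¹ = q i := inv_eq_of_mul_eq_one_right (by rw [← sq]; exact hq2 i)
    have hxj : (q j)⁻¹ = q j := inv_eq_of_mul_eq_one_right (by rw [← sq]; exact hq2 j)
    have : q j * q i = q i * q j := by
      calc q j * q i = (q i * q j)⁻¹ := by rw [mul_inv_rev, hxi, hxj]
        _ = q i * q j := h2
    exact this.symm
  -- facet subgroups
  set F : Subgroup (Matrix (Fin (n + 1)) (Fin (n + 1)) ℤ)ˣ :=
    Subgroup.closure (Set.range fun i : Fin n => r i.castSucc) with hFdef
  set Fd : Subgroup (Matrix (Fin (n + 1)) (Fin (n + 1)) (ZMod d))ˣ :=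
    F.map (modRed (n + 1) d) with hFddef
  have hinjFd : ∀ x ∈ Fd, ∀ y ∈ Fd, π x = π y → x = y := by
    rintro x hx y hy hxy
    obtain ⟨a, ha, rfl⟩ := hx
    obtain ⟨b, hb, rfl⟩ := hy
    rw [hπq, hπq] at hxy
    exact congrArg _ (hfaithful ha hb hxy)
  have hsub : ∀ K : Set (Fin (n + 1)), Fin.last n ∉ K →
      Subgroup.closure (q '' K) ≤ Fd := by
    intro K hK
    rw [Subgroup.closure_le]
    rintro x ⟨j, hj, rfl⟩
    have hj' : j ≠ Fin.last n := fun h => hK (h ▸ hj)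
    have hr : r j ∈ F := Subgroup.subset_closure
      ⟨j.castPred hj', by simp [Fin.castSucc_castPred]⟩
    exact Subgroup.mem_map_of_mem _ hr
  have hmapcl : ∀ K : Set (Fin (n + 1)),
      Subgroup.map π (Subgroup.closure (q '' K)) = Subgroup.closure (lam '' K) := by
    intro K
    rw [MonoidHom.map_closure, Set.image_image]
    exact congrArg _ (Set.image_congr fun j _ => hπqi j)
  have hpimem : ∀ (K : Set (Fin (n + 1))) (g), g ∈ Subgroup.closure (q '' K) →
      π g ∈ Subgroup.closure (lam '' K) := fun K g hg =>
    hmapcl K ▸ Subgroup.mem_map_of_mem π hg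
  -- key decomposition lemma for sets containing the last index
  have key : ∀ I : Set (Fin (n + 1)), Fin.last n ∈ I → ∀ g,
      g ∈ Subgroup.closure (q '' I) → π g = 1 →
      ∃ m : ℕ, (∀ j : Fin (n + 1), m ≤ (j : ℕ) → j ∈ I) ∧
        g ∈ Subgroup.closure (q '' {j : Fin (n + 1) | m ≤ (j : ℕ)}) := by
    intro I hlast g hg hg1
    set P : Set ℕ := {k | ∀ j : Fin (n + 1), k ≤ (j : ℕ) → j ∈ I} with hPdef
    have hnP : n ∈ P := by
      intro j hj
      have hje : j = Fin.last n := Fin.ext (le_antisymm (Nat.lt_succ_iff.mp j.isLt) hj)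
      rwa [hje]
    set m := sInf P with hmdef
    have hmP : m ∈ P := Nat.sInf_mem ⟨n, hnP⟩
    have hmn : m ≤ n := Nat.sInf_le hnP
    have hgap : ∀ j : Fin (n + 1), j ∈ I → (j : ℕ) < m → (j : ℕ) + 2 ≤ m := by
      intro j hj hjm
      by_contra hcon
      push_neg at hcon
      have hjP : (j : ℕ) ∈ P := by
        intro k hk
        rcases eq_or_lt_of_le hk with he | hl
        · have : k = j := Fin.ext he.symm
          rwa [this]
        · exact hmP k (by omega)
      have := Nat.sInf_le hjP
      omega
    set I₁ : Set (Fin (n + 1)) := {j | j ∈ I ∧ (j : ℕ) < m} with hI₁def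
    set M : Set (Fin (n + 1)) := {j : Fin (n + 1) | m ≤ (j : ℕ)} with hMdef
    have hIsub : q '' I ⊆ q '' I₁ ∪ q '' M := by
      rintro x ⟨j, hj, rfl⟩
      rcases lt_or_ge (j : ℕ) m with h | h
      · exact Or.inl ⟨j, ⟨hj, h⟩, rfl⟩
      · exact Or.inr ⟨j, h, rfl⟩
    have hcommST : ∀ a ∈ q '' I₁, ∀ b ∈ q '' M, Commute a b := by
      rintro a ⟨j, ⟨hj, hjm⟩, rfl⟩ b ⟨k, hk, rfl⟩
      exact hqcomm j k (le_trans (hgap j hj hjm) hk)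
    have hg' : g ∈ Subgroup.closure (q '' I₁ ∪ q '' M) :=
      Subgroup.closure_mono hIsub hg
    obtain ⟨a, ha, b, hb, rfl⟩ := aux_mem_closure_union hcommST hg'
    have hπa : π a ∈ Subgroup.closure (lam '' I₁) := hpimem _ _ ha
    have hπb : π b ∈ Subgroup.closure (lam '' M) := hpimem _ _ hb
    have hπab : π a * π b = 1 := by rw [← map_mul]; exact hg1
    have hπaM : π a ∈ Subgroup.closure (lam '' M) := by
      rw [eq_inv_of_mul_eq_one_left hπab]; exact inv_mem hπb
    have hmem : π a ∈ Subgroup.closure (lam '' I₁) ⊓ Subgroup.closure (lam '' M) :=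
      ⟨hπa, hπaM⟩
    rw [hsint I₁ M] at hmem
    have hdisj : I₁ ∩ M = (∅ : Set (Fin (n + 1))) := by
      ext j
      simp only [Set.mem_inter_iff, Set.mem_setOf_eq, Set.mem_empty_iff_false, iff_false,
        hI₁def, hMdef]
      rintro ⟨⟨_, h1⟩, h2⟩
      omega
    rw [hdisj, Set.image_empty, Subgroup.closure_empty, Subgroup.mem_bot] at hmem
    have hlastI₁ : Fin.last n ∉ I₁ := by
      rintro ⟨-, hlt⟩
      rw [Fin.val_last] at hlt
      omega
    have haFd : a ∈ Fd := hsub I₁ hlastI₁ ha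
    have ha1 : a = 1 := hinjFd a haFd 1 (one_mem Fd) (by rw [hmem, map_one])
    exact ⟨m, hmP, by rw [ha1, one_mul]; exact hb⟩
  -- easy case of the intersection condition
  have easy : ∀ I J : Set (Fin (n + 1)), Fin.last n ∉ J → ∀ g,
      g ∈ Subgroup.closure (q '' I) → g ∈ Subgroup.closure (q '' J) →
      g ∈ Subgroup.closure (q '' (I ∩ J)) := by
    intro I J hJ g hgI hgJ
    have h1 : π g ∈ Subgroup.closure (lam '' (I ∩ J)) := by
      rw [← hsint I J]
      exact ⟨hpimem _ _ hgI, hpimem _ _ hgJ⟩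
    rw [← hmapcl (I ∩ J)] at h1
    obtain ⟨h, hh, hπh⟩ := Subgroup.mem_map.mp h1
    have hgFd : g ∈ Fd := hsub J hJ hgJ
    have hhFd : h ∈ Fd := hsub (I ∩ J) (fun hc => hJ hc.2) hh
    have : g = h := hinjFd g hgFd h hhFd hπh.symm
    rwa [this]
  refine ⟨?_, hq2', ?_⟩
  · intro i
    have hne : q i ≠ 1 := by
      intro h
      have h2 := hs1 i
      have : lam i = 1 := by rw [← hπqi i, h, map_one]
      rw [this, orderOf_one] at h2
      omega
    exact orderOf_eq_prime (hq2 i) hne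
  · intro I J
    refine le_antisymm ?_ (le_inf
      (Subgroup.closure_mono (Set.image_mono Set.inter_subset_left))
      (Subgroup.closure_mono (Set.image_mono Set.inter_subset_right)))
    rintro g ⟨hgI, hgJ⟩
    by_cases hJl : Fin.last n ∈ J
    · by_cases hIl : Fin.last n ∈ I
      · -- hard case
        have h1 : π g ∈ Subgroup.closure (lam '' (I ∩ J)) := by
          rw [← hsint I J]
          exact ⟨hpimem _ _ hgI, hpimem _ _ hgJ⟩
        rw [← hmapcl (I ∩ J)] at h1
        obtain ⟨h, hh, hπh⟩ := Subgroup.mem_map.mp h1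
        have hg'1 : π (g * h⁻¹) = 1 := by
          rw [map_mul, map_inv, hπh, mul_inv_cancel]
        have hhI : h ∈ Subgroup.closure (q '' I) :=
          Subgroup.closure_mono (Set.image_mono Set.inter_subset_left) hh
        have hhJ : h ∈ Subgroup.closure (q '' J) :=
          Subgroup.closure_mono (Set.image_mono Set.inter_subset_right) hh
        have hg'I : g * h⁻¹ ∈ Subgroup.closure (q '' I) := mul_mem hgI (inv_mem hhI)
        have hg'J : g * h⁻¹ ∈ Subgroup.closure (q '' J) := mul_mem hgJ (inv_mem hhJ)
        obtain ⟨mI, hmI, hgMI⟩ := key I hIl _ hg'I hg'1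
        obtain ⟨mJ, hmJ, hgMJ⟩ := key J hJl _ hg'J hg'1
        have hfin : g * h⁻¹ ∈ Subgroup.closure (q '' (I ∩ J)) := by
          rcases le_total mI mJ with hle | hle
          · refine Subgroup.closure_mono (Set.image_mono ?_) hgMJ
            exact fun j hj => ⟨hmI j (le_trans hle hj), hmJ j hj⟩
          · refine Subgroup.closure_mono (Set.image_mono ?_) hgMI
            exact fun j hj => ⟨hmI j hj, hmJ j (le_trans hle hj)⟩
        have : g = (g * h⁻¹) * h := by group
        rw [this]
        exact mul_mem hfin hh
      · have := easy J I hIl g hgJ hgI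
        rwa [Set.inter_comm] at this
    · exact easy I J hJl g hgI hgJ
end

section
/- Let G = ⟨r_0, r_1, r_2, r_3, r_4, r_5⟩ be a Coxeter group isomorphic to [3,4,3,3,3]. Define s_0 = r_1, s_1 = r_0, s_2 = r_2 r_1 r_2, s_3 = r_3, s_4 = r_4, s_5 = r_5. Then H = ⟨s_0, ..., s_5⟩ is a subgroup of G, the elements s_i are involutions, and they satisfy the Coxeter relations of type [3,3,4,3,3]: (s_0 s_1)^3 = (s_1 s_2)^3 = (s_2 s_3)^4 = (s_3 s_4)^3 = (s_4 s_5)^3 = 1 and (s_i s_j)^2 = 1 for |i - j| ≥ 2. -/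
/-- The Coxeter matrix of the string Coxeter group `[3,4,3,3,3]`. -/
def M34333 : CoxeterMatrix (Fin 6) where
  M := !![1, 3, 2, 2, 2, 2;
          3, 1, 4, 2, 2, 2;
          2, 4, 1, 3, 2, 2;
          2, 2, 3, 1, 3, 2;
          2, 2, 2, 3, 1, 3;
          2, 2, 2, 2, 3, 1]
  off_diagonal i i' h := by
    fin_cases i <;> fin_cases i' <;> simp_all

namespace Stmt14Aux

noncomputable abbrev q (i : Fin 6) : M34333.Group := M34333.simple i

lemma sq (i : Fin 6) : q i * q i = 1 :=
  M34333.toCoxeterSystem.simple_mul_simple_self i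

lemma sq' (i : Fin 6) (x : M34333.Group) : q i * (q i * x) = x := by
  rw [← mul_assoc, sq, one_mul]

lemma qinv (i : Fin 6) : (q i)⁻¹ = q i := inv_eq_of_mul_eq_one_right (sq i)

lemma rel (i j : Fin 6) : (q i * q j) ^ M34333 i j = 1 :=
  M34333.toCoxeterSystem.simple_mul_simple_pow i j

lemma rel01 : (q 0 * q 1) ^ 3 = 1 := rel 0 1
lemma rel10 : (q 1 * q 0) ^ 3 = 1 := rel 1 0
lemma rel12 : (q 1 * q 2) ^ 4 = 1 := rel 1 2
lemma rel21 : (q 2 * q 1) ^ 4 = 1 := rel 2 1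
lemma rel23 : (q 2 * q 3) ^ 3 = 1 := rel 2 3
lemma rel34 : (q 3 * q 4) ^ 3 = 1 := rel 3 4
lemma rel45 : (q 4 * q 5) ^ 3 = 1 := rel 4 5

lemma swap_pow {a b : M34333.Group} {n : ℕ} (h : (a * b) ^ n = 1) : (b * a) ^ n = 1 := by
  have e : b * a = b * (a * b) * b⁻¹ := by group
  rw [e, conj_pow, h, mul_one, mul_inv_cancel]

lemma comm (i j : Fin 6) (h : (q i * q j) ^ 2 = 1) : q i * q j = q j * q i := by
  have h2 : (q i * q j) * (q i * q j) = 1 := by rw [← pow_two]; exact h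
  have h3 := inv_eq_of_mul_eq_one_right h2
  rw [mul_inv_rev, qinv, qinv] at h3
  exact h3.symm

lemma comm02 : q 0 * q 2 = q 2 * q 0 := comm 0 2 (rel 0 2)
lemma comm13 : q 1 * q 3 = q 3 * q 1 := comm 1 3 (rel 1 3)
lemma comm14 : q 1 * q 4 = q 4 * q 1 := comm 1 4 (rel 1 4)
lemma comm15 : q 1 * q 5 = q 5 * q 1 := comm 1 5 (rel 1 5)
lemma comm24 : q 2 * q 4 = q 4 * q 2 := comm 2 4 (rel 2 4)
lemma comm25 : q 2 * q 5 = q 5 * q 2 := comm 2 5 (rel 2 5)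

/-- `(s 0 * s 2)^2 = 1`. -/
lemma c02 : (q 1 * (q 2 * q 1 * q 2)) ^ 2 = 1 := by
  have h : (q 1 * q 2) ^ 4 = 1 := rel12
  simp only [pow_succ, pow_zero, one_mul, mul_assoc] at h ⊢
  exact h

/-- `(s 1 * s 2)^3 = 1`. -/
lemma c12 : (q 0 * (q 2 * q 1 * q 2)) ^ 3 = 1 := by
  have e : q 0 * (q 2 * q 1 * q 2) = q 2 * (q 0 * q 1) * (q 2)⁻¹ := by
    rw [qinv]
    simp only [mul_assoc]
    rw [← mul_assoc (q 0) (q 2), comm02, mul_assoc]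
  rw [e, conj_pow, rel01, mul_one, mul_inv_cancel]

lemma braid23 : q 2 * q 3 * q 2 = q 3 * q 2 * q 3 := by
  have h : (q 2 * q 3 * q 2) * (q 3 * q 2 * q 3) = 1 := by
    have h3 : (q 2 * q 3) ^ 3 = 1 := rel23
    simp only [pow_succ, pow_zero, one_mul, mul_assoc] at h3 ⊢
    exact h3
  have h2 := inv_eq_of_mul_eq_one_right h
  simp only [mul_inv_rev, qinv, ← mul_assoc] at h2
  exact h2

lemma e2 : q 1 * q 2 * q 3 * q 2 = q 3 * (q 1 * (q 2 * q 3)) := by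
  calc q 1 * q 2 * q 3 * q 2 = q 1 * (q 2 * q 3 * q 2) := by simp only [mul_assoc]
    _ = q 1 * (q 3 * q 2 * q 3) := by rw [braid23]
    _ = q 1 * q 3 * (q 2 * q 3) := by simp only [mul_assoc]
    _ = q 3 * q 1 * (q 2 * q 3) := by rw [comm13]
    _ = q 3 * (q 1 * (q 2 * q 3)) := by simp only [mul_assoc]

lemma t_sq : (q 1 * q 2 * q 3 * q 2) ^ 2 = q 3 * ((q 1 * q 2) ^ 2) * (q 3)⁻¹ := by
  rw [qinv, pow_two, e2, pow_two]
  simp only [mul_assoc, sq']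

/-- `(s 2 * s 3)^4 = 1`. -/
lemma c23 : (q 2 * q 1 * q 2 * q 3) ^ 4 = 1 := by
  have e1 : q 2 * q 1 * q 2 * q 3 = q 2 * (q 1 * q 2 * q 3 * q 2) * (q 2)⁻¹ := by
    rw [qinv]
    simp only [mul_assoc]
    rw [sq 2, mul_one]
  have ht : (q 1 * q 2 * q 3 * q 2) ^ 4 = 1 := by
    have e4 : (q 1 * q 2 * q 3 * q 2) ^ 4 = ((q 1 * q 2 * q 3 * q 2) ^ 2) ^ 2 := by
      rw [← pow_mul]
    have r4 : ((q 1 * q 2) ^ 2) ^ 2 = 1 := by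
      rw [← pow_mul]; exact rel12
    rw [e4, t_sq, conj_pow, r4, mul_one, mul_inv_cancel]
  rw [e1, conj_pow, ht, mul_one, mul_inv_cancel]

/-- `(s 2 * s 4)^2 = 1`. -/
lemma c24' : (q 2 * q 1 * q 2 * q 4) ^ 2 = 1 := by
  have h42 : ∀ x, q 4 * (q 2 * x) = q 2 * (q 4 * x) := fun x => by
    rw [← mul_assoc, ← comm24, mul_assoc]
  have h41 : ∀ x, q 4 * (q 1 * x) = q 1 * (q 4 * x) := fun x => by
    rw [← mul_assoc, ← comm14, mul_assoc]
  simp only [pow_two, mul_assoc]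
  rw [h42, h41, h42]
  simp only [sq, sq', mul_one]

/-- `(s 2 * s 5)^2 = 1`. -/
lemma c25' : (q 2 * q 1 * q 2 * q 5) ^ 2 = 1 := by
  have h52 : ∀ x, q 5 * (q 2 * x) = q 2 * (q 5 * x) := fun x => by
    rw [← mul_assoc, ← comm25, mul_assoc]
  have h51 : ∀ x, q 5 * (q 1 * x) = q 1 * (q 5 * x) := fun x => by
    rw [← mul_assoc, ← comm15, mul_assoc]
  simp only [pow_two, mul_assoc]
  rw [h52, h51, h52]
  simp only [sq, sq', mul_one]

lemma q_ne_one (i : Fin 6) : q i ≠ 1 := by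
  intro h
  have h1 : M34333.toCoxeterSystem.length (q i) = 1 :=
    M34333.toCoxeterSystem.length_simple i
  have h2 : M34333.toCoxeterSystem.length (q i) = 0 :=
    M34333.toCoxeterSystem.length_eq_zero_iff.mpr h
  rw [h1] at h2
  exact one_ne_zero h2

lemma s2_ne_one : q 2 * q 1 * q 2 ≠ 1 := by
  intro h
  apply q_ne_one 1
  have h2 : q 2 * (q 2 * q 1 * q 2) * q 2 = q 2 * 1 * q 2 := by rw [h]
  simp only [mul_one, mul_assoc, sq, sq', mul_one] at h2
  exact h2

lemma s2_sq : (q 2 * q 1 * q 2) * (q 2 * q 1 * q 2) = 1 := by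
  simp only [mul_assoc, sq, sq', mul_one]

lemma ord2 {g : M34333.Group} (h : g * g = 1) (hne : g ≠ 1) : orderOf g = 2 :=
  orderOf_eq_prime (by rw [pow_two]; exact h) hne

end Stmt14Aux

open Stmt14Aux in
/-- Let `G = ⟨r_0, …, r_5⟩ ≅ [3,4,3,3,3]` and set
`s_0 = r_1, s_1 = r_0, s_2 = r_2 r_1 r_2, s_3 = r_3, s_4 = r_4, s_5 = r_5`.
Then the `s_i` are involutions satisfying the Coxeter relations of the string type
`[3,3,4,3,3]`. -/
theorem stmt_14 : ∀ s : Fin 6 → M34333.Group,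
    (s 0 = M34333.simple 1 ∧ s 1 = M34333.simple 0 ∧
      s 2 = M34333.simple 2 * M34333.simple 1 * M34333.simple 2 ∧
      s 3 = M34333.simple 3 ∧ s 4 = M34333.simple 4 ∧ s 5 = M34333.simple 5) →
    (∀ i, orderOf (s i) = 2) ∧
      (s 0 * s 1) ^ 3 = 1 ∧ (s 1 * s 2) ^ 3 = 1 ∧ (s 2 * s 3) ^ 4 = 1 ∧
      (s 3 * s 4) ^ 3 = 1 ∧ (s 4 * s 5) ^ 3 = 1 ∧
      (∀ i j : Fin 6, (i : ℕ) + 2 ≤ (j : ℕ) ∨ (j : ℕ) + 2 ≤ (i : ℕ) →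
        (s i * s j) ^ 2 = 1) := by
  rintro s ⟨h0, h1, h2, h3, h4, h5⟩
  refine ⟨?_, ?_, ?_, ?_, ?_, ?_, ?_⟩
  · intro i
    have hc : i = 0 ∨ i = 1 ∨ i = 2 ∨ i = 3 ∨ i = 4 ∨ i = 5 := by omega
    rcases hc with h | h | h | h | h | h <;> subst h
    · rw [h0]; exact ord2 (sq 1) (q_ne_one 1)
    · rw [h1]; exact ord2 (sq 0) (q_ne_one 0)
    · rw [h2]; exact ord2 s2_sq s2_ne_one
    · rw [h3]; exact ord2 (sq 3) (q_ne_one 3)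
    · rw [h4]; exact ord2 (sq 4) (q_ne_one 4)
    · rw [h5]; exact ord2 (sq 5) (q_ne_one 5)
  · rw [h0, h1]; exact rel10
  · rw [h1, h2]; exact c12
  · rw [h2, h3]; exact c23
  · rw [h3, h4]; exact rel34
  · rw [h4, h5]; exact rel45
  · intro i j hij
    have hi : i = 0 ∨ i = 1 ∨ i = 2 ∨ i = 3 ∨ i = 4 ∨ i = 5 := by omega
    have hj : j = 0 ∨ j = 1 ∨ j = 2 ∨ j = 3 ∨ j = 4 ∨ j = 5 := by omega
    rcases hi with h | h | h | h | h | h <;> subst h <;>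
      rcases hj with h | h | h | h | h | h <;> subst h <;>
      (try simp only [Fin.isValue, Fin.val_zero, Fin.val_one] at hij) <;>
      first
      | (exfalso; omega)
      | (rw [h0, h2]; exact c02)
      | (rw [h2, h0]; exact swap_pow c02)
      | (rw [h0, h3]; exact rel 1 3)
      | (rw [h3, h0]; exact rel 3 1)
      | (rw [h0, h4]; exact rel 1 4)
      | (rw [h4, h0]; exact rel 4 1)
      | (rw [h0, h5]; exact rel 1 5)
      | (rw [h5, h0]; exact rel 5 1)
      | (rw [h1, h3]; exact rel 0 3)
      | (rw [h3, h1]; exact rel 3 0)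
      | (rw [h1, h4]; exact rel 0 4)
      | (rw [h4, h1]; exact rel 4 0)
      | (rw [h1, h5]; exact rel 0 5)
      | (rw [h5, h1]; exact rel 5 0)
      | (rw [h2, h4]; exact c24')
      | (rw [h4, h2]; exact swap_pow c24')
      | (rw [h2, h5]; exact c25')
      | (rw [h5, h2]; exact swap_pow c25')
      | (rw [h3, h5]; exact rel 3 5)
      | (rw [h5, h3]; exact rel 5 3)
end
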